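/- arXiv:2603.19800 — 2 statements merged into one kernel-verified Lean document; each statement's English description precedes it below -/
import Mathlib

section
/- Let n ≥ 1 and 0 ≤ i ≤ n−1, let P be a real symmetric idempotent n×n matrix (an orthogonal projection) of rank n−i, and set Q = P/(n−i) with entries q_{kℓ}. Then: (1) Σ over all pairwise distinct triples (k,ℓ,s) of |q_{kℓ}·q_{ks}| ≤ n/(n−i); (2) Σ over all pairwise distinct triples (k,ℓ,s) of |q_{kℓ}·q_{ks}·q_{ℓs}| ≤ n/(n−i)²; (3) Σ over all pairwise distinct quadruples (k,ℓ,s,m) of |q_{kℓ}·q_{ks}·q_{ℓm}| ≤ n/(n−i)^{3/2}; (4) Σ over all pairwise distinct quadruples (k,ℓ,s,m) of |q_{kℓ}·q_{ks}·q_{km}| ≤ n^{3/2}/(n−i)². -/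
open Matrix

lemma trace_eq_rank_of_idem {n : ℕ} (P : Matrix (Fin n) (Fin n) ℝ) (hidem : P * P = P) :
    Matrix.trace P = (P.rank : ℝ) := by
  have hproj : LinearMap.IsProj (LinearMap.range P.mulVecLin) P.mulVecLin := by
    constructor
    · intro x; exact LinearMap.mem_range_self _ x
    · rintro x ⟨y, rfl⟩
      have : (P * P).mulVecLin y = P.mulVecLin y := by rw [hidem]
      rwa [Matrix.mulVecLin_mul] at this
  have h1 := hproj.trace
  have h2 : LinearMap.trace ℝ (Fin n → ℝ) P.mulVecLin = Matrix.trace P := by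
    rw [LinearMap.trace_eq_matrix_trace ℝ (Pi.basisFun ℝ (Fin n))]
    congr 1
    rw [LinearMap.toMatrix_eq_toMatrix']
    exact LinearMap.toMatrix'_toLin' P
  rw [h2] at h1
  rw [h1]
  rfl

lemma aux_tri {n : ℕ} (f : Fin n → Fin n → ℝ) :
    ∑ t : Fin n × Fin n × Fin n, f t.1 t.2.1 * f t.1 t.2.2 = ∑ k, (∑ l, f k l) ^ 2 := by
  simp only [Fintype.sum_prod_type, ← Finset.mul_sum, ← Finset.sum_mul, sq]

lemma aux_quad4 {n : ℕ} (f : Fin n → Fin n → ℝ) :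
    ∑ t : Fin n × Fin n × Fin n × Fin n,
      f t.1 t.2.1 * f t.1 t.2.2.1 * f t.1 t.2.2.2 = ∑ k, (∑ l, f k l) ^ 3 := by
  simp only [Fintype.sum_prod_type, ← Finset.mul_sum, ← Finset.sum_mul]
  ring_nf

lemma aux_quad3 {n : ℕ} (f : Fin n → Fin n → ℝ) :
    ∑ t : Fin n × Fin n × Fin n × Fin n,
      f t.1 t.2.1 * f t.1 t.2.2.1 * f t.2.1 t.2.2.2
      = ∑ k, ∑ l, f k l * ((∑ s, f k s) * (∑ m, f l m)) := by
  simp only [Fintype.sum_prod_type, ← Finset.mul_sum, ← Finset.sum_mul]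
  exact Finset.sum_congr rfl fun k _ => Finset.sum_congr rfl fun l _ => by ring
/-- The trace-normalized projection `Q = P / (n − i)`. -/
noncomputable def qOf (n i : ℕ) (P : Matrix (Fin n) (Fin n) ℝ) :
    Matrix (Fin n) (Fin n) ℝ :=
  (((n - i : ℕ) : ℝ))⁻¹ • P

/-- **Deterministic bounds for the normalized projection matrix** (Lemma 3.4, remaining
bounds): if `P` is an `n × n` orthogonal projection of rank `n − i` and `Q = P/(n−i)`, then
`∑_{k≠ℓ≠s} |q_{kℓ} q_{ks}| ≤ n/(n−i)`, `∑_{k≠ℓ≠s} |q_{kℓ} q_{ks} q_{ℓs}| ≤ n/(n−i)²`,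
`∑_{k≠ℓ≠s≠m} |q_{kℓ} q_{ks} q_{ℓm}| ≤ n/(n−i)^{3/2}` and
`∑_{k≠ℓ≠s≠m} |q_{kℓ} q_{ks} q_{km}| ≤ n^{3/2}/(n−i)²`. -/
theorem q_matrix_bounds_two
    (n i : ℕ) (hn : 1 ≤ n) (hi : i ≤ n - 1)
    (P : Matrix (Fin n) (Fin n) ℝ) (hsymm : P.IsSymm) (hidem : P * P = P)
    (hrank : P.rank = n - i) :
    (∑ t ∈ (Finset.univ : Finset (Fin n × Fin n × Fin n)).filter
        (fun t => t.1 ≠ t.2.1 ∧ t.1 ≠ t.2.2 ∧ t.2.1 ≠ t.2.2),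
        |qOf n i P t.1 t.2.1 * qOf n i P t.1 t.2.2|
      ≤ (n : ℝ) / ((n - i : ℕ) : ℝ)) ∧
    (∑ t ∈ (Finset.univ : Finset (Fin n × Fin n × Fin n)).filter
        (fun t => t.1 ≠ t.2.1 ∧ t.1 ≠ t.2.2 ∧ t.2.1 ≠ t.2.2),
        |qOf n i P t.1 t.2.1 * qOf n i P t.1 t.2.2 * qOf n i P t.2.1 t.2.2|
      ≤ (n : ℝ) / ((n - i : ℕ) : ℝ) ^ 2) ∧
    (∑ t ∈ (Finset.univ : Finset (Fin n × Fin n × Fin n × Fin n)).filter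
        (fun t => t.1 ≠ t.2.1 ∧ t.1 ≠ t.2.2.1 ∧ t.1 ≠ t.2.2.2 ∧
          t.2.1 ≠ t.2.2.1 ∧ t.2.1 ≠ t.2.2.2 ∧ t.2.2.1 ≠ t.2.2.2),
        |qOf n i P t.1 t.2.1 * qOf n i P t.1 t.2.2.1 * qOf n i P t.2.1 t.2.2.2|
      ≤ (n : ℝ) / ((n - i : ℕ) : ℝ) ^ ((3 : ℝ) / 2)) ∧
    (∑ t ∈ (Finset.univ : Finset (Fin n × Fin n × Fin n × Fin n)).filter
        (fun t => t.1 ≠ t.2.1 ∧ t.1 ≠ t.2.2.1 ∧ t.1 ≠ t.2.2.2 ∧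
          t.2.1 ≠ t.2.2.1 ∧ t.2.1 ≠ t.2.2.2 ∧ t.2.2.1 ≠ t.2.2.2),
        |qOf n i P t.1 t.2.1 * qOf n i P t.1 t.2.2.1 * qOf n i P t.1 t.2.2.2|
      ≤ (n : ℝ) ^ ((3 : ℝ) / 2) / ((n - i : ℕ) : ℝ) ^ 2) := by

  have hr1 : 1 ≤ n - i := by omega
  set R : ℝ := ((n - i : ℕ) : ℝ) with hRdef
  have hR1 : (1:ℝ) ≤ R := by rw [hRdef]; exact_mod_cast hr1
  have hR0 : (0:ℝ) < R := by linarith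
  set Q : Matrix (Fin n) (Fin n) ℝ := qOf n i P with hQdef
  have hQ : ∀ k l, Q k l = P k l / R := by
    intro k l
    simp [hQdef, qOf, Matrix.smul_apply, smul_eq_mul, div_eq_inv_mul, hRdef]
  have hPsym : ∀ k l, P l k = P k l := by
    intro k l
    conv_lhs => rw [← hsymm]
    rfl
  have hP : ∀ k l, P k l = ∑ s, P k s * P l s := by
    intro k l
    conv_lhs => rw [← hidem]
    rw [Matrix.mul_apply]
    exact Finset.sum_congr rfl fun s _ => by rw [hPsym l s]
  have hPd : ∀ k, P k k = ∑ s, (P k s) ^ 2 := by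
    intro k; rw [hP k k]; exact Finset.sum_congr rfl fun s _ => (sq (P k s)).symm
  have hPd0 : ∀ k, 0 ≤ P k k := by
    intro k; rw [hPd k]; exact Finset.sum_nonneg fun s _ => sq_nonneg _
  have hterm : ∀ k l, (P k l) ^ 2 ≤ P k k := by
    intro k l; rw [hPd k]
    exact Finset.single_le_sum (f := fun s => P k s ^ 2)
      (fun s _ => sq_nonneg _) (Finset.mem_univ l)
  have hPd1 : ∀ k, P k k ≤ 1 := by
    intro k; nlinarith [hterm k k, hPd0 k]
  have htr : ∑ k, P k k = R := by
    have h := trace_eq_rank_of_idem P hidem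
    rw [hrank] at h
    rw [hRdef, ← h]
    simp [Matrix.trace, Matrix.diag]
  -- Q facts
  have hQrow : ∀ k, ∑ l, (Q k l) ^ 2 = P k k / R ^ 2 := by
    intro k
    simp only [hQ, div_pow]
    rw [← Finset.sum_div, ← hPd k]
  have hQabs : ∀ k l, |Q k l| ≤ 1 / R := by
    intro k l
    have h1 : (Q k l) ^ 2 ≤ P k k / R ^ 2 := by
      rw [← hQrow k]
      exact Finset.single_le_sum (f := fun s => Q k s ^ 2)
        (fun s _ => sq_nonneg _) (Finset.mem_univ l)
    have h2 : P k k / R ^ 2 ≤ 1 / R ^ 2 := by gcongr; exact hPd1 k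
    have h4 := Real.sqrt_le_sqrt (h1.trans h2)
    rwa [Real.sqrt_sq_eq_abs, show (1:ℝ)/R^2 = (1/R)^2 by ring,
      Real.sqrt_sq (by positivity)] at h4
  set a : Fin n → ℝ := fun k => ∑ l, |Q k l| with hadef
  have ha0 : ∀ k, 0 ≤ a k := fun k => Finset.sum_nonneg fun l _ => abs_nonneg _
  have ha2 : ∀ k, (a k) ^ 2 ≤ (n : ℝ) * (P k k / R ^ 2) := by
    intro k
    have h := sq_sum_le_card_mul_sum_sq (s := (Finset.univ : Finset (Fin n)))
      (f := fun l => |Q k l|)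
    simpa [hadef, sq_abs, hQrow k] using h
  have hSa : ∑ k, (a k) ^ 2 ≤ (n : ℝ) / R := by
    calc ∑ k, (a k) ^ 2 ≤ ∑ k, (n : ℝ) * (P k k / R ^ 2) :=
          Finset.sum_le_sum fun k _ => ha2 k
      _ = (n : ℝ) * ((∑ k, P k k) / R ^ 2) := by
          rw [← Finset.mul_sum, ← Finset.sum_div]
      _ = (n : ℝ) / R := by
          rw [htr, pow_two, div_mul_eq_div_div, div_self hR0.ne', mul_one_div]
  have hnn : (0:ℝ) < (n : ℝ) := by exact_mod_cast hn
  -- Bound 1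
  have goal1 : ∑ t ∈ (Finset.univ : Finset (Fin n × Fin n × Fin n)).filter
      (fun t => t.1 ≠ t.2.1 ∧ t.1 ≠ t.2.2 ∧ t.2.1 ≠ t.2.2),
      |Q t.1 t.2.1 * Q t.1 t.2.2| ≤ (n : ℝ) / R := by
    calc ∑ t ∈ (Finset.univ : Finset (Fin n × Fin n × Fin n)).filter
          (fun t => t.1 ≠ t.2.1 ∧ t.1 ≠ t.2.2 ∧ t.2.1 ≠ t.2.2),
          |Q t.1 t.2.1 * Q t.1 t.2.2|
        ≤ ∑ t : Fin n × Fin n × Fin n, |Q t.1 t.2.1 * Q t.1 t.2.2| :=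
          Finset.sum_le_sum_of_subset_of_nonneg (Finset.filter_subset _ _)
            (fun t _ _ => abs_nonneg _)
      _ = ∑ k, (a k) ^ 2 := by
          simp only [abs_mul]
          exact aux_tri (fun k l => |Q k l|)
      _ ≤ (n : ℝ) / R := hSa
  refine ⟨goal1, ?_, ?_, ?_⟩
  -- Bound 2
  · calc ∑ t ∈ (Finset.univ : Finset (Fin n × Fin n × Fin n)).filter
          (fun t => t.1 ≠ t.2.1 ∧ t.1 ≠ t.2.2 ∧ t.2.1 ≠ t.2.2),
          |Q t.1 t.2.1 * Q t.1 t.2.2 * Q t.2.1 t.2.2|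
        ≤ ∑ t ∈ (Finset.univ : Finset (Fin n × Fin n × Fin n)).filter
          (fun t => t.1 ≠ t.2.1 ∧ t.1 ≠ t.2.2 ∧ t.2.1 ≠ t.2.2),
          |Q t.1 t.2.1 * Q t.1 t.2.2| * (1 / R) := by
          refine Finset.sum_le_sum fun t _ => ?_
          rw [abs_mul]
          exact mul_le_mul_of_nonneg_left (hQabs _ _) (abs_nonneg _)
      _ = (∑ t ∈ (Finset.univ : Finset (Fin n × Fin n × Fin n)).filter
          (fun t => t.1 ≠ t.2.1 ∧ t.1 ≠ t.2.2 ∧ t.2.1 ≠ t.2.2),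
          |Q t.1 t.2.1 * Q t.1 t.2.2|) * (1 / R) := by rw [Finset.sum_mul]
      _ ≤ ((n : ℝ) / R) * (1 / R) := by
          exact mul_le_mul_of_nonneg_right goal1 (by positivity)
      _ = (n : ℝ) / R ^ 2 := by rw [div_mul_div_comm, mul_one, ← sq]
  -- Bound 3
  · have hD : ∑ t : Fin n × Fin n × Fin n × Fin n,
        |Q t.1 t.2.1 * Q t.1 t.2.2.1 * Q t.2.1 t.2.2.2|
        = ∑ p : Fin n × Fin n, |Q p.1 p.2| * (a p.1 * a p.2) := by
      simp only [abs_mul]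
      rw [aux_quad3 (fun k l => |Q k l|)]
      rw [Fintype.sum_prod_type]
    have hcs := Finset.sum_mul_sq_le_sq_mul_sq (Finset.univ : Finset (Fin n × Fin n))
      (fun p => |Q p.1 p.2|) (fun p => a p.1 * a p.2)
    have hsq1 : ∑ p : Fin n × Fin n, |Q p.1 p.2| ^ 2 = 1 / R := by
      calc ∑ p : Fin n × Fin n, |Q p.1 p.2| ^ 2
          = ∑ k, ∑ l, (Q k l) ^ 2 := by
            rw [Fintype.sum_prod_type]; simp [sq_abs]
        _ = (∑ k, P k k) / R ^ 2 := by
            simp only [hQrow]; rw [Finset.sum_div]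
        _ = 1 / R := by rw [htr, pow_two, div_mul_eq_div_div, div_self hR0.ne']
    have hsq2 : ∑ p : Fin n × Fin n, (a p.1 * a p.2) ^ 2 = (∑ k, (a k) ^ 2) ^ 2 := by
      simp only [Fintype.sum_prod_type, mul_pow, ← Finset.mul_sum, ← Finset.sum_mul]
      rw [sq]
    set D : ℝ := ∑ p : Fin n × Fin n, |Q p.1 p.2| * (a p.1 * a p.2) with hDdef
    have hD0 : 0 ≤ D := Finset.sum_nonneg fun p _ =>
      mul_nonneg (abs_nonneg _) (mul_nonneg (ha0 _) (ha0 _))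
    have hD2 : D ^ 2 ≤ (1 / R) * ((n : ℝ) / R) ^ 2 := by
      rw [hsq1, hsq2] at hcs
      have h2 : (∑ k, (a k) ^ 2) ^ 2 ≤ ((n : ℝ) / R) ^ 2 := by
        have h0 : 0 ≤ ∑ k, (a k) ^ 2 := Finset.sum_nonneg fun k _ => sq_nonneg _
        exact pow_le_pow_left₀ h0 hSa 2
      calc D ^ 2 ≤ (1 / R) * (∑ k, (a k) ^ 2) ^ 2 := hcs
        _ ≤ (1 / R) * ((n : ℝ) / R) ^ 2 := by
            exact mul_le_mul_of_nonneg_left h2 (by positivity)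
    have hrt : R ^ ((3:ℝ)/2) = R * Real.sqrt R := by
      rw [show (3:ℝ)/2 = 1 + 1/2 by norm_num, Real.rpow_add hR0, Real.rpow_one,
        ← Real.sqrt_eq_rpow]
    have hsR : (0:ℝ) < Real.sqrt R := Real.sqrt_pos.mpr hR0
    have hsR2 : Real.sqrt R ^ 2 = R := Real.sq_sqrt (le_of_lt hR0)
    have hDle : D ≤ (n : ℝ) / (R * Real.sqrt R) := by
      rw [le_div_iff₀ (by positivity)]
      have hX2 : (D * (R * Real.sqrt R)) ^ 2 ≤ (n : ℝ) ^ 2 := by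
        have he : (D * (R * Real.sqrt R)) ^ 2 = D ^ 2 * (R ^ 2 * R) := by
          rw [mul_pow, mul_pow, hsR2]
        rw [he]
        calc D ^ 2 * (R ^ 2 * R) ≤ ((1 / R) * ((n : ℝ) / R) ^ 2) * (R ^ 2 * R) :=
              mul_le_mul_of_nonneg_right hD2 (by positivity)
          _ = (n : ℝ) ^ 2 := by field_simp
      exact (abs_le_of_sq_le_sq' hX2 hnn.le).2
    calc ∑ t ∈ (Finset.univ : Finset (Fin n × Fin n × Fin n × Fin n)).filter
          (fun t => t.1 ≠ t.2.1 ∧ t.1 ≠ t.2.2.1 ∧ t.1 ≠ t.2.2.2 ∧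
            t.2.1 ≠ t.2.2.1 ∧ t.2.1 ≠ t.2.2.2 ∧ t.2.2.1 ≠ t.2.2.2),
          |Q t.1 t.2.1 * Q t.1 t.2.2.1 * Q t.2.1 t.2.2.2|
        ≤ ∑ t : Fin n × Fin n × Fin n × Fin n,
          |Q t.1 t.2.1 * Q t.1 t.2.2.1 * Q t.2.1 t.2.2.2| :=
          Finset.sum_le_sum_of_subset_of_nonneg (Finset.filter_subset _ _)
            (fun t _ _ => abs_nonneg _)
      _ = D := hD
      _ ≤ (n : ℝ) / (R * Real.sqrt R) := hDle
      _ = (n : ℝ) / R ^ ((3:ℝ)/2) := by rw [hrt]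
  -- Bound 4
  · have hsn : (0:ℝ) < Real.sqrt n := Real.sqrt_pos.mpr hnn
    have hsn2 : Real.sqrt n ^ 2 = (n : ℝ) := Real.sq_sqrt (le_of_lt hnn)
    have hak : ∀ k, a k ≤ Real.sqrt n / R := by
      intro k
      have h1 : (a k) ^ 2 ≤ (Real.sqrt n / R) ^ 2 := by
        rw [div_pow, hsn2]
        calc (a k) ^ 2 ≤ (n : ℝ) * (P k k / R ^ 2) := ha2 k
          _ ≤ (n : ℝ) * (1 / R ^ 2) := by
              refine mul_le_mul_of_nonneg_left ?_ (le_of_lt hnn)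
              gcongr; exact hPd1 k
          _ = (n : ℝ) / R ^ 2 := by ring
      nlinarith [ha0 k, div_pos hsn hR0]
    have hstep4 : ∀ k, (a k) ^ 3 ≤ (Real.sqrt n / R) * ((n : ℝ) * (P k k / R ^ 2)) := by
      intro k
      calc (a k) ^ 3 = a k * (a k) ^ 2 := by ring
        _ ≤ (Real.sqrt n / R) * ((n : ℝ) * (P k k / R ^ 2)) :=
            mul_le_mul (hak k) (ha2 k) (sq_nonneg _) (by positivity)
    have hsum4 : ∑ k, (a k) ^ 3 ≤ Real.sqrt n * (n : ℝ) / R ^ 2 := by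
      calc ∑ k, (a k) ^ 3
          ≤ ∑ k, (Real.sqrt n / R) * ((n : ℝ) * (P k k / R ^ 2)) :=
            Finset.sum_le_sum fun k _ => hstep4 k
        _ = (Real.sqrt n / R) * ((n : ℝ) * ((∑ k, P k k) / R ^ 2)) := by
            rw [← Finset.mul_sum, ← Finset.mul_sum, ← Finset.sum_div]
        _ = Real.sqrt n * (n : ℝ) / R ^ 2 := by
            rw [htr]; field_simp
    have hn32 : (n : ℝ) ^ ((3:ℝ)/2) = Real.sqrt n * (n : ℝ) := by
      rw [show (3:ℝ)/2 = 1 + 1/2 by norm_num, Real.rpow_add hnn, Real.rpow_one,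
        ← Real.sqrt_eq_rpow]
      ring
    calc ∑ t ∈ (Finset.univ : Finset (Fin n × Fin n × Fin n × Fin n)).filter
          (fun t => t.1 ≠ t.2.1 ∧ t.1 ≠ t.2.2.1 ∧ t.1 ≠ t.2.2.2 ∧
            t.2.1 ≠ t.2.2.1 ∧ t.2.1 ≠ t.2.2.2 ∧ t.2.2.1 ≠ t.2.2.2),
          |Q t.1 t.2.1 * Q t.1 t.2.2.1 * Q t.1 t.2.2.2|
        ≤ ∑ t : Fin n × Fin n × Fin n × Fin n,
          |Q t.1 t.2.1 * Q t.1 t.2.2.1 * Q t.1 t.2.2.2| :=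
          Finset.sum_le_sum_of_subset_of_nonneg (Finset.filter_subset _ _)
            (fun t _ _ => abs_nonneg _)
      _ = ∑ k, (a k) ^ 3 := by
          simp only [abs_mul]
          exact aux_quad4 (fun k l => |Q k l|)
      _ ≤ Real.sqrt n * (n : ℝ) / R ^ 2 := hsum4
      _ = (n : ℝ) ^ ((3:ℝ)/2) / R ^ 2 := by rw [hn32]
end

section
/- Let n ≥ 2. Let Y = (Y₁,…,Y_n) be an exchangeable random vector of real random variables with Y₁² + Y₂² + ⋯ + Y_n² = 1 almost surely, and set β₄ = E[Y₁⁴]. Let q = (q₁,…,q_n) be a random vector, independent of Y, with 0 ≤ q_j ≤ 1 almost surely for each j and q₁ + ⋯ + q_n = 1 almost surely, and set S₂ = q₁² + ⋯ + q_n². Then E[ ( Σ_{j=1}^{n} q_j·( n·Y_j² − 1 ) )² ] = n·(n²·β₄ − 1)/(n−1) · E[ S₂ − 1/n ]. -/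
open MeasureTheory ProbabilityTheory

/-- **Variance identity for the diagonal quadratic form** (identity (3.14)): if
`(Y₁,…,Y_n)` is exchangeable with `∑_j Y_j² = 1` a.s., `β₄ = E[Y₁⁴]`, and `(q₁,…,q_n)` is
independent of `Y` with `0 ≤ q_j ≤ 1` and `∑_j q_j = 1` a.s., then with
`S₂ = ∑_j q_j²`,
`E[(∑_j q_j (n Y_j² − 1))²] = n (n² β₄ − 1)/(n−1) · E[S₂ − 1/n]`. -/
theorem diag_quadratic_variance_identity
    (n : ℕ) (hn : 2 ≤ n)
    (Ω : Type*) [MeasurableSpace Ω] (P : Measure Ω) [IsProbabilityMeasure P]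
    (Y q : Ω → Fin n → ℝ) (hYm : Measurable Y) (hqm : Measurable q)
    (hexch : ∀ σ : Equiv.Perm (Fin n),
      Measure.map (fun ω i => Y ω (σ i)) P = Measure.map Y P)
    (hYnorm : ∀ᵐ ω ∂P, ∑ j, Y ω j ^ 2 = 1)
    (hindep : IndepFun Y q P)
    (hq01 : ∀ᵐ ω ∂P, ∀ j, 0 ≤ q ω j ∧ q ω j ≤ 1)
    (hqsum : ∀ᵐ ω ∂P, ∑ j, q ω j = 1) :
    ∫ ω, (∑ j, q ω j * ((n : ℝ) * Y ω j ^ 2 - 1)) ^ 2 ∂P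
      = (n : ℝ) * ((n : ℝ) ^ 2 * (∫ ω, Y ω ⟨0, by omega⟩ ^ 4 ∂P) - 1) / ((n : ℝ) - 1)
        * ∫ ω, ((∑ j, q ω j ^ 2) - 1 / (n : ℝ)) ∂P := by
  classical
  set i0 : Fin n := ⟨0, by omega⟩ with hi0def
  set i1 : Fin n := ⟨1, by omega⟩ with hi1def
  have h01 : i0 ≠ i1 := by simp [hi0def, hi1def, Fin.ext_iff]
  have hnR : (2:ℝ) ≤ (n:ℝ) := by exact_mod_cast hn
  have hn1 : (n:ℝ) - 1 ≠ 0 := by linarith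
  have hn0 : (n:ℝ) ≠ 0 := by linarith
  set Z : Ω → Fin n → ℝ := fun ω j => (n:ℝ) * Y ω j ^ 2 - 1 with hZdef
  have hYj : ∀ j, Measurable fun ω => Y ω j := fun j => (measurable_pi_apply j).comp hYm
  have hqj : ∀ j, Measurable fun ω => q ω j := fun j => (measurable_pi_apply j).comp hqm
  have hZj : ∀ j, Measurable fun ω => Z ω j := fun j => by
    exact (measurable_const.mul ((hYj j).pow measurable_const)).sub measurable_const
  -- a.s. bounds
  have hYsq : ∀ᵐ ω ∂P, ∀ j, Y ω j ^ 2 ≤ 1 := by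
    filter_upwards [hYnorm] with ω h j
    calc Y ω j ^ 2 ≤ ∑ i, Y ω i ^ 2 :=
          Finset.single_le_sum (f := fun i => Y ω i ^ 2) (fun i _ => sq_nonneg _)
            (Finset.mem_univ j)
      _ = 1 := h
  have hZb : ∀ᵐ ω ∂P, ∀ j, |Z ω j| ≤ (n:ℝ) := by
    filter_upwards [hYsq] with ω h j
    have h1 := h j
    have h2 : (0:ℝ) ≤ Y ω j ^ 2 := sq_nonneg _
    rw [abs_le]
    constructor <;> simp only [hZdef] <;> nlinarith
  have hqb : ∀ᵐ ω ∂P, ∀ j, |q ω j| ≤ 1 := by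
    filter_upwards [hq01] with ω h j
    rw [abs_le]
    exact ⟨by linarith [(h j).1], (h j).2⟩
  -- integrability from boundedness
  have hbd : ∀ (f : Ω → ℝ) (C : ℝ), Measurable f → (∀ᵐ ω ∂P, |f ω| ≤ C) → Integrable f P :=
    fun f C hm hb => (integrable_const C).mono' hm.aestronglyMeasurable
      (by simpa [Real.norm_eq_abs] using hb)
  have intZZ : ∀ j k, Integrable (fun ω => Z ω j * Z ω k) P := by
    intro j k
    refine hbd _ ((n:ℝ) * n) ((hZj j).mul (hZj k)) ?_
    filter_upwards [hZb] with ω h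
    rw [abs_mul]
    exact mul_le_mul (h j) (h k) (abs_nonneg _) (by linarith)
  have intqq : ∀ j k, Integrable (fun ω => q ω j * q ω k) P := by
    intro j k
    refine hbd _ 1 ((hqj j).mul (hqj k)) ?_
    filter_upwards [hqb] with ω h
    rw [abs_mul]
    simpa using mul_le_mul (h j) (h k) (abs_nonneg _) (by linarith)
  have intprod : ∀ j k, Integrable (fun ω => (Z ω j * Z ω k) * (q ω j * q ω k)) P := by
    intro j k
    refine hbd _ ((n:ℝ) * n * 1) (((hZj j).mul (hZj k)).mul ((hqj j).mul (hqj k))) ?_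
    filter_upwards [hZb, hqb] with ω h1 h2
    rw [abs_mul, abs_mul, abs_mul]
    have hZZ : |Z ω j| * |Z ω k| ≤ (n:ℝ) * n :=
      mul_le_mul (h1 j) (h1 k) (abs_nonneg _) (by linarith)
    have hqq2 : |q ω j| * |q ω k| ≤ 1 := by
      simpa using mul_le_mul (h2 j) (h2 k) (abs_nonneg _) zero_le_one
    exact mul_le_mul hZZ hqq2 (mul_nonneg (abs_nonneg _) (abs_nonneg _)) (by positivity)
  have intY2 : ∀ j, Integrable (fun ω => Y ω j ^ 2) P := by
    intro j
    refine hbd _ 1 ((hYj j).pow measurable_const) ?_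
    filter_upwards [hYsq] with ω h
    rw [abs_of_nonneg (sq_nonneg _)]; exact h j
  have intY4 : ∀ j, Integrable (fun ω => Y ω j ^ 4) P := by
    intro j
    refine hbd _ 1 ((hYj j).pow measurable_const) ?_
    filter_upwards [hYsq] with ω h
    have h2 := sq_nonneg (Y ω j)
    have : Y ω j ^ 4 = (Y ω j ^ 2) ^ 2 := by ring
    rw [this, abs_of_nonneg (sq_nonneg _)]
    nlinarith [h j]
  -- exchangeability transfer
  have hexInt : ∀ (σ : Equiv.Perm (Fin n)) (g : (Fin n → ℝ) → ℝ), Measurable g →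
      ∫ ω, g (fun i => Y ω (σ i)) ∂P = ∫ ω, g (Y ω) ∂P := by
    intro σ g hg
    have h1 : Measurable (fun ω i => Y ω (σ i)) :=
      measurable_pi_lambda _ fun i => (measurable_pi_apply (σ i)).comp hYm
    rw [← integral_map h1.aemeasurable hg.aestronglyMeasurable, hexch σ,
      integral_map hYm.aemeasurable hg.aestronglyMeasurable]

  -- moments of Y by exchangeability
  have hmom2 : ∀ j, ∫ ω, Y ω j ^ 2 ∂P = ∫ ω, Y ω i0 ^ 2 ∂P := by
    intro j
    have h := hexInt (Equiv.swap i0 j) (fun v => v i0 ^ 2) (by fun_prop)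
    simpa [Equiv.swap_apply_left] using h
  have hmom4 : ∀ j, ∫ ω, Y ω j ^ 4 ∂P = ∫ ω, Y ω i0 ^ 4 ∂P := by
    intro j
    have h := hexInt (Equiv.swap i0 j) (fun v => v i0 ^ 4) (by fun_prop)
    simpa [Equiv.swap_apply_left] using h
  have hEY2 : ∫ ω, Y ω i0 ^ 2 ∂P = 1 / n := by
    have hs : ∫ ω, ∑ j, Y ω j ^ 2 ∂P = 1 := by
      rw [integral_congr_ae hYnorm]; simp
    rw [integral_finset_sum _ (fun j _ => intY2 j)] at hs
    have h2 : ∑ j : Fin n, ∫ ω, Y ω j ^ 2 ∂P = (n:ℝ) * ∫ ω, Y ω i0 ^ 2 ∂P := by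
      rw [Finset.sum_congr rfl fun j _ => hmom2 j]
      simp [Finset.sum_const, Finset.card_univ, nsmul_eq_mul]
    rw [h2] at hs
    field_simp at hs ⊢
    linarith
  set β : ℝ := ∫ ω, Y ω i0 ^ 4 ∂P with hβ
  set c : ℝ := (n:ℝ)^2 * β - 1 with hc
  have hdiag : ∀ j, ∫ ω, Z ω j * Z ω j ∂P = c := by
    intro j
    have he : (fun ω => Z ω j * Z ω j)
        = fun ω => ((n:ℝ)^2 * Y ω j ^ 4 - (2*(n:ℝ)) * Y ω j ^ 2) + 1 := by
      funext ω; simp only [hZdef]; ring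
    have int1 : Integrable (fun ω => (n:ℝ)^2 * Y ω j ^ 4 - (2*(n:ℝ)) * Y ω j ^ 2) P := by
      exact ((intY4 j).const_mul _).sub ((intY2 j).const_mul _)
    rw [he, integral_add int1 (integrable_const 1),
      integral_sub ((intY4 j).const_mul _) ((intY2 j).const_mul _),
      integral_const_mul, integral_const_mul, hmom4 j, hmom2 j, hEY2]
    simp only [integral_const, probReal_univ, ENNReal.toReal_one, smul_eq_mul, one_mul, mul_one]
    rw [hc, hβ]
    field_simp
    ring
  have hcross : ∀ j k, j ≠ k → ∫ ω, Z ω j * Z ω k ∂P = ∫ ω, Z ω i0 * Z ω i1 ∂P := by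
    intro j k hjk
    set s := Equiv.swap i0 j with hs
    have hsk : s k ≠ i0 := by
      intro h
      exact hjk (s.injective (h.trans (Equiv.swap_apply_right i0 j).symm)).symm
    set σ : Equiv.Perm (Fin n) := (Equiv.swap i1 (s k)).trans s with hσ
    have hσ0 : σ i0 = j := by
      have ht : Equiv.swap i1 (s k) i0 = i0 :=
        Equiv.swap_apply_of_ne_of_ne h01 (Ne.symm hsk)
      rw [hσ, Equiv.trans_apply, ht, hs, Equiv.swap_apply_left]
    have hσ1 : σ i1 = k := by
      simp [hσ, Equiv.trans_apply, Equiv.swap_apply_left, hs, Equiv.swap_apply_self]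
    have h := hexInt σ (fun v => ((n:ℝ) * v i0 ^ 2 - 1) * ((n:ℝ) * v i1 ^ 2 - 1)) (by fun_prop)
    simp only [hσ0, hσ1] at h
    simpa [hZdef] using h
  set m01 : ℝ := ∫ ω, Z ω i0 * Z ω i1 ∂P with hm01def
  have hrow : c + ((n:ℝ) - 1) * m01 = 0 := by
    have h0 : ∫ ω, ∑ k, Z ω i0 * Z ω k ∂P = 0 := by
      have hae : (fun ω => ∑ k, Z ω i0 * Z ω k) =ᵐ[P] fun _ => (0:ℝ) := by
        filter_upwards [hYnorm] with ω h
        rw [← Finset.mul_sum]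
        have : ∑ k, Z ω k = 0 := by
          simp only [hZdef]
          rw [Finset.sum_sub_distrib, ← Finset.mul_sum, h]
          simp
        rw [this, mul_zero]
      rw [integral_congr_ae hae, integral_zero]
    rw [integral_finset_sum _ (fun k _ => intZZ i0 k)] at h0
    have hsplit : ∑ k : Fin n, ∫ ω, Z ω i0 * Z ω k ∂P = c + ((n:ℝ) - 1) * m01 := by
      rw [← Finset.sum_erase_add _ _ (Finset.mem_univ i0), hdiag i0]
      have hcg : ∀ k ∈ Finset.univ.erase i0,
          ∫ ω, Z ω i0 * Z ω k ∂P = m01 :=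
        fun k hk => hcross i0 k (Ne.symm (Finset.ne_of_mem_erase hk))
      rw [Finset.sum_congr rfl hcg, Finset.sum_const,
        Finset.card_erase_of_mem (Finset.mem_univ _)]
      simp only [Finset.card_univ, Fintype.card_fin, nsmul_eq_mul]
      rw [Nat.cast_sub (by omega : 1 ≤ n)]
      push_cast
      ring
    rw [hsplit] at h0
    exact h0

  -- independence factorization
  have hfact : ∀ j k, ∫ ω, (Z ω j * Z ω k) * (q ω j * q ω k) ∂P
      = (∫ ω, Z ω j * Z ω k ∂P) * ∫ ω, q ω j * q ω k ∂P := by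
    intro j k
    have hφ : Measurable fun v : Fin n → ℝ =>
        ((n:ℝ) * v j ^ 2 - 1) * ((n:ℝ) * v k ^ 2 - 1) := by fun_prop
    have hψ : Measurable fun v : Fin n → ℝ => v j * v k := by fun_prop
    have hi := (hindep.comp hφ hψ).integral_mul_eq_mul_integral
      (by exact (intZZ j k).aestronglyMeasurable) (by exact (intqq j k).aestronglyMeasurable)
    simpa [Function.comp, Pi.mul_apply, hZdef] using hi
  -- expansion of the square
  have hLHS : ∫ ω, (∑ j, q ω j * ((n:ℝ) * Y ω j ^ 2 - 1)) ^ 2 ∂P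
      = ∑ j : Fin n, ∑ k : Fin n, ∫ ω, (Z ω j * Z ω k) * (q ω j * q ω k) ∂P := by
    have he : (fun ω => (∑ j, q ω j * ((n:ℝ) * Y ω j ^ 2 - 1)) ^ 2)
        = fun ω => ∑ j : Fin n, ∑ k : Fin n, (Z ω j * Z ω k) * (q ω j * q ω k) := by
      funext ω
      rw [sq, Finset.sum_mul_sum]
      exact Finset.sum_congr rfl fun j _ => Finset.sum_congr rfl fun k _ => by
        simp only [hZdef]; ring
    rw [he, integral_finset_sum _ (fun j _ => integrable_finset_sum _ (fun k _ => by
      exact intprod j k))]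
    exact Finset.sum_congr rfl fun j _ => integral_finset_sum _ (fun k _ => by exact intprod j k)
  -- q-side quantities
  set D : ℝ := ∑ j : Fin n, ∫ ω, q ω j * q ω j ∂P with hD
  have hT : ∑ j : Fin n, ∑ k : Fin n, ∫ ω, q ω j * q ω k ∂P = 1 := by
    have h1 : ∫ ω, ∑ j : Fin n, ∑ k : Fin n, q ω j * q ω k ∂P = 1 := by
      have hae : (fun ω => ∑ j : Fin n, ∑ k : Fin n, q ω j * q ω k) =ᵐ[P] fun _ => (1:ℝ) := by
        filter_upwards [hqsum] with ω h
        rw [← Finset.sum_mul_sum, h, one_mul]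
      rw [integral_congr_ae hae]; simp
    rw [integral_finset_sum _ (fun j _ => integrable_finset_sum _ (fun k _ => intqq j k))] at h1
    rw [← h1]
    exact Finset.sum_congr rfl fun j _ => (integral_finset_sum _ (fun k _ => intqq j k)).symm
  have hRHS : ∫ ω, ((∑ j, q ω j ^ 2) - 1 / (n:ℝ)) ∂P = D - 1 / n := by
    have hint : Integrable (fun ω => ∑ j, q ω j ^ 2) P :=
      integrable_finset_sum _ (fun j _ => by simpa [sq] using intqq j j)
    rw [integral_sub hint (integrable_const _), integral_finset_sum _ (fun j _ => by
      simpa [sq] using intqq j j)]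
    simp only [integral_const, probReal_univ, ENNReal.toReal_one, smul_eq_mul, one_mul]
    rw [hD]
    congr 1
    exact Finset.sum_congr rfl fun j _ => by simp [sq]
  -- put the pieces together
  have hkey : ∀ j k, ∫ ω, (Z ω j * Z ω k) * (q ω j * q ω k) ∂P
      = m01 * (∫ ω, q ω j * q ω k ∂P)
        + (if k = j then (c - m01) * ∫ ω, q ω j * q ω j ∂P else 0) := by
    intro j k
    by_cases h : k = j
    · subst h
      rw [if_pos rfl, hfact, hdiag]
      ring
    · rw [if_neg h, hfact, hcross j k (Ne.symm h)]
      ring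
  have hsum : ∑ j : Fin n, ∑ k : Fin n, ∫ ω, (Z ω j * Z ω k) * (q ω j * q ω k) ∂P
      = m01 * 1 + (c - m01) * D := by
    have : ∀ j : Fin n, ∑ k : Fin n, ∫ ω, (Z ω j * Z ω k) * (q ω j * q ω k) ∂P
        = m01 * (∑ k : Fin n, ∫ ω, q ω j * q ω k ∂P)
          + (c - m01) * ∫ ω, q ω j * q ω j ∂P := by
      intro j
      rw [Finset.sum_congr rfl fun k _ => hkey j k, Finset.sum_add_distrib, ← Finset.mul_sum]
      congr 1
      simp
    rw [Finset.sum_congr rfl fun j _ => this j, Finset.sum_add_distrib, ← Finset.mul_sum,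
      ← Finset.mul_sum, hT, ← hD]
  have hm01val : m01 = -c / ((n:ℝ) - 1) := by
    field_simp
    linarith [hrow]
  rw [hLHS, hsum, hRHS, hm01val]
  field_simp
  ring
end
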